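/- Let C be a nonempty closed convex subset of a real Hilbert space H and T : C → C a κ-strict pseudo-contraction (0 ≤ κ < 1) with F(T) ≠ ∅. Fix x, x₀ ∈ C, α ∈ [0,1], set y = (1−α)x₀ + αTx and θ = (1−α)(‖x₀‖² − ‖x‖²) + ακ‖x − Tx‖² − α(1−α)‖x₀ − Tx‖². If u ∈ C satisfies ‖y − u‖² ≤ ‖x − u‖² + 2(1−α)⟨x − x₀, u⟩ + θ, then ‖x − Tx‖ ≤ (2/(1 − √(ακ)))‖x − u‖ + (√(1−α)/(1 − √(ακ)))(‖x₀ − Tx‖ + ‖x₀ − u‖). -/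

import Mathlib

open RealInnerProductSpace

theorem halpern_strict_pseudo_contraction_Cx_subset
    {H : Type*} [NormedAddCommGroup H] [InnerProductSpace ℝ H] [CompleteSpace H]
    (C : Set H) (hC : IsClosed C) (hCconv : Convex ℝ C) (hCne : C.Nonempty)
    (T : H → H) (hT : ∀ x ∈ C, T x ∈ C)
    (κ : ℝ) (hκ0 : 0 ≤ κ) (hκ1 : κ < 1)
    (hspc : ∀ x ∈ C, ∀ y ∈ C,
      ‖T x - T y‖ ^ 2 ≤ ‖x - y‖ ^ 2 + κ * ‖(x - T x) - (y - T y)‖ ^ 2)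
    (hF : ∃ p ∈ C, T p = p)
    (x x₀ : H) (hx : x ∈ C) (hx₀ : x₀ ∈ C)
    (α : ℝ) (hα0 : 0 ≤ α) (hα1 : α ≤ 1)
    (y : H) (hy : y = (1 - α) • x₀ + α • T x)
    (θ : ℝ)
    (hθ : θ = (1 - α) * (‖x₀‖ ^ 2 - ‖x‖ ^ 2) + α * κ * ‖x - T x‖ ^ 2 -
      α * (1 - α) * ‖x₀ - T x‖ ^ 2)
    (u : H) (hu : u ∈ C)
    (huC : ‖y - u‖ ^ 2 ≤ ‖x - u‖ ^ 2 + 2 * (1 - α) * ⟪x - x₀, u⟫ + θ) :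
    ‖x - T x‖ ≤ (2 / (1 - Real.sqrt (α * κ))) * ‖x - u‖ +
      (Real.sqrt (1 - α) / (1 - Real.sqrt (α * κ))) *
        (‖x₀ - T x‖ + ‖x₀ - u‖) := by
  subst hy hθ
  -- key identity
  have hid : ‖((1 - α) • x₀ + α • T x) - u‖ ^ 2 =
      ‖x - u‖ ^ 2 + 2 * (1 - α) * ⟪x - x₀, u⟫ +
        ((1 - α) * (‖x₀‖ ^ 2 - ‖x‖ ^ 2) + α * κ * ‖x - T x‖ ^ 2 -
          α * (1 - α) * ‖x₀ - T x‖ ^ 2) +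
        (α * ‖T x - u‖ ^ 2 - α * ‖x - u‖ ^ 2 - α * κ * ‖x - T x‖ ^ 2) := by
    simp only [← real_inner_self_eq_norm_sq]
    simp only [inner_sub_sub_self, inner_sub_left, inner_sub_right, inner_add_left,
      inner_add_right, inner_smul_left, inner_smul_right, real_inner_comm x₀ x,
      real_inner_comm (T x) x, real_inner_comm u x, real_inner_comm u x₀,
      real_inner_comm u (T x), real_inner_comm (T x) x₀, RCLike.ofReal_real_eq_id, id, starRingEnd_apply, star_trivial, map_sub, map_one]
    ring
  have h1 : α * ‖T x - u‖ ^ 2 ≤ α * ‖x - u‖ ^ 2 + α * κ * ‖x - T x‖ ^ 2 := by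
    rw [hid] at huC; linarith
  have htri1 : ‖T x - u‖ ≤ ‖x₀ - T x‖ + ‖x₀ - u‖ := by
    have := norm_sub_le_norm_sub_add_norm_sub (T x) x₀ u
    have h := norm_sub_rev (T x) x₀
    linarith
  have h2 : ‖T x - u‖ ^ 2 ≤ ‖x - u‖ ^ 2 + α * κ * ‖x - T x‖ ^ 2 +
      (1 - α) * (‖x₀ - T x‖ + ‖x₀ - u‖) ^ 2 := by
    have hnn : (0:ℝ) ≤ 1 - α := by linarith
    have ha : (1 - α) * ‖T x - u‖ ^ 2 ≤ (1 - α) * (‖x₀ - T x‖ + ‖x₀ - u‖) ^ 2 :=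
      mul_le_mul_of_nonneg_left (pow_le_pow_left₀ (norm_nonneg _) htri1 2) hnn
    have hb : 0 ≤ (1 - α) * ‖x - u‖ ^ 2 := mul_nonneg hnn (sq_nonneg _)
    nlinarith
  set s := Real.sqrt (α * κ) with hs
  set t := Real.sqrt (1 - α) with ht
  have hακ : 0 ≤ α * κ := mul_nonneg hα0 hκ0
  have hs2 : s ^ 2 = α * κ := Real.sq_sqrt hακ
  have ht2 : t ^ 2 = 1 - α := Real.sq_sqrt (by linarith)
  have hs0 : 0 ≤ s := Real.sqrt_nonneg _
  have ht0 : 0 ≤ t := Real.sqrt_nonneg _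
  have hs1 : s < 1 := by
    rw [hs, show (1 : ℝ) = Real.sqrt 1 by simp]
    exact Real.sqrt_lt_sqrt hακ (by nlinarith)
  have h3 : ‖T x - u‖ ≤ ‖x - u‖ + s * ‖x - T x‖ + t * (‖x₀ - T x‖ + ‖x₀ - u‖) := by
    have hrhs : 0 ≤ ‖x - u‖ + s * ‖x - T x‖ + t * (‖x₀ - T x‖ + ‖x₀ - u‖) := by
      have := norm_nonneg (x₀ - T x); have := norm_nonneg (x₀ - u)
      have := norm_nonneg (x - u); have := norm_nonneg (x - T x)
      positivity
    nlinarith [norm_nonneg (T x - u), norm_nonneg (x - u), norm_nonneg (x - T x),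
      norm_nonneg (x₀ - T x), norm_nonneg (x₀ - u),
      mul_nonneg (mul_nonneg hs0 (norm_nonneg (x - T x))) hrhs,
      mul_nonneg hs0 ht0, mul_nonneg (norm_nonneg (x₀ - T x)) (norm_nonneg (x₀ - u)),
      mul_nonneg (mul_nonneg hs0 (norm_nonneg (x - T x)))
        (mul_nonneg ht0 (add_nonneg (norm_nonneg (x₀ - T x)) (norm_nonneg (x₀ - u)))),
      mul_nonneg (norm_nonneg (x - u)) (mul_nonneg hs0 (norm_nonneg (x - T x))),
      mul_nonneg (norm_nonneg (x - u))
        (mul_nonneg ht0 (add_nonneg (norm_nonneg (x₀ - T x)) (norm_nonneg (x₀ - u))))]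
  have htri2 : ‖x - T x‖ ≤ ‖x - u‖ + ‖T x - u‖ := by
    have := norm_sub_le_norm_sub_add_norm_sub x u (T x)
    have h := norm_sub_rev u (T x)
    linarith
  have hpos : 0 < 1 - s := by linarith
  rw [div_mul_eq_mul_div, div_mul_eq_mul_div, ← add_div, le_div_iff₀ hpos]
  have : ‖x - T x‖ * (1 - s) = ‖x - T x‖ - s * ‖x - T x‖ := by ring
  rw [this]
  linarith
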